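/- Let μ be the coin-tossing measure on the Cantor space 2^ℕ and fix r ∈ (0,1). There exists a compact set K ⊆ 2^ℕ such that Φ(K) is open, the set Sharp(K) is Π⁰₃-complete, and moreover the set {x ∈ 2^ℕ : D_K(x) = r} is Π⁰₃-complete. (Π⁰₃-complete means: the set is a countable intersection of Fσ sets, and every subset of 2^ℕ that is a countable intersection of Fσ sets is the preimage of it under some continuous function 2^ℕ → 2^ℕ.) -/

import Mathlib

open MeasureTheory Set Filter Topology

/-- The basic clopen cylinder of length `n` around `x` in the Cantor space. -/
def cylinder (x : ℕ → Bool) (n : ℕ) : Set (ℕ → Bool) :=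
  {y | ∀ i < n, y i = x i}

/-- The "local measure" ratio `2^n · μ(A ∩ [x↾n])`, whose limit (when it exists) is the
density of `A` at `x` in the Cantor space. -/
noncomputable def densSeq (μ : Measure (ℕ → Bool)) (A : Set (ℕ → Bool))
    (x : ℕ → Bool) (n : ℕ) : ℝ :=
  2 ^ n * (μ (A ∩ cylinder x n)).toReal

/-- A set is `Fσ` iff it is a countable union of closed sets. -/
def IsFsigma {Y : Type*} [TopologicalSpace Y] (S : Set Y) : Prop :=
  ∃ F : ℕ → Set Y, (∀ n, IsClosed (F n)) ∧ S = ⋃ n, F n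

/-- A set is `Π⁰₃` iff it is a countable intersection of `Fσ` sets. -/
def IsPi03 {Y : Type*} [TopologicalSpace Y] (S : Set Y) : Prop :=
  ∃ F : ℕ → Set Y, (∀ n, IsFsigma (F n)) ∧ S = ⋂ n, F n

/-- A subset of the Cantor space is `Π⁰₃`-complete iff it is `Π⁰₃` and every `Π⁰₃` subset
of the Cantor space is its preimage under some continuous self-map of the Cantor space. -/
def IsPi03Complete (S : Set (ℕ → Bool)) : Prop :=
  IsPi03 S ∧ ∀ T : Set (ℕ → Bool), IsPi03 T →
    ∃ g : (ℕ → Bool) → (ℕ → Bool), Continuous g ∧ T = g ⁻¹' S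

namespace Stmt13

/-! ## Cylinder basics -/

lemma mem_cyl {y x : ℕ → Bool} {n : ℕ} : y ∈ cylinder x n ↔ ∀ i < n, y i = x i := Iff.rfl

lemma cylinder_zero (x : ℕ → Bool) : cylinder x 0 = univ := by
  ext y; simp [mem_cyl]

lemma self_mem_cylinder (x : ℕ → Bool) (n : ℕ) : x ∈ cylinder x n := fun i _ => rfl

lemma cylinder_eq_of_agree {x y : ℕ → Bool} {n : ℕ} (h : ∀ i < n, y i = x i) :
    cylinder y n = cylinder x n := by
  ext z
  constructor <;> intro hz i hi
  · rw [hz i hi, h i hi]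
  · rw [hz i hi, ← h i hi]

lemma cylinder_antitone (x : ℕ → Bool) {m n : ℕ} (h : m ≤ n) :
    cylinder x n ⊆ cylinder x m := fun z hz i hi => hz i (lt_of_lt_of_le hi h)

lemma cylinder_eq_iInter (x : ℕ → Bool) (n : ℕ) :
    cylinder x n = ⋂ i ∈ Finset.range n, (fun y : ℕ → Bool => y i) ⁻¹' {x i} := by
  ext y; simp [mem_cyl]

lemma isOpen_cylinder (x : ℕ → Bool) (n : ℕ) : IsOpen (cylinder x n) := by
  rw [cylinder_eq_iInter]
  exact isOpen_biInter_finset fun i _ => (continuous_apply i).isOpen_preimage _ (isOpen_discrete _)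

lemma isClosed_cylinder (x : ℕ → Bool) (n : ℕ) : IsClosed (cylinder x n) := by
  rw [cylinder_eq_iInter]
  exact isClosed_biInter fun i _ => IsClosed.preimage (continuous_apply i) (isClosed_discrete _)

lemma measurableSet_cylinder (x : ℕ → Bool) (n : ℕ) : MeasurableSet (cylinder x n) :=
  (isClosed_cylinder x n).measurableSet

/-- splitting a cylinder into its two children -/
lemma cylinder_split (x : ℕ → Bool) (n : ℕ) :
    cylinder x n = cylinder (Function.update x n false) (n+1) ∪
      cylinder (Function.update x n true) (n+1) := by
  ext y
  constructor
  · intro hy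
    rcases Bool.eq_false_or_eq_true (y n) with h | h
    · right
      intro i hi
      rcases Nat.lt_succ_iff_lt_or_eq.1 hi with hi' | hi'
      · rw [Function.update_of_ne (Nat.ne_of_lt hi'), hy i hi']
      · subst hi'; simp [h]
    · left
      intro i hi
      rcases Nat.lt_succ_iff_lt_or_eq.1 hi with hi' | hi'
      · rw [Function.update_of_ne (Nat.ne_of_lt hi'), hy i hi']
      · subst hi'; simp [h]
  · rintro (hy | hy) <;>
    · intro i hi
      have := hy i (Nat.lt_succ_of_lt hi)
      rwa [Function.update_of_ne (Nat.ne_of_lt hi)] at this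

lemma cylinder_split_disjoint (x : ℕ → Bool) (n : ℕ) :
    Disjoint (cylinder (Function.update x n false) (n+1))
      (cylinder (Function.update x n true) (n+1)) := by
  rw [Set.disjoint_left]
  intro y h1 h2
  have e1 := h1 n (Nat.lt_succ_self n)
  have e2 := h2 n (Nat.lt_succ_self n)
  simp at e1 e2
  rw [e1] at e2; exact Bool.noConfusion e2

/-- A set determined by the first `n` coordinates is open and measurable. -/
lemma prefix_set_basic (P : (ℕ → Bool) → Prop) (n : ℕ)
    (hP : ∀ x y, (∀ i < n, x i = y i) → P x → P y) :
    IsOpen {x | P x} ∧ MeasurableSet {x | P x} := by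
  classical
  have key : {x | P x} = ⋃ (c : Fin n → Bool) (_ : P (fun i => if h : i < n then c ⟨i, h⟩ else false)),
      cylinder (fun i => if h : i < n then c ⟨i, h⟩ else false) n := by
    ext x
    simp only [mem_iUnion, mem_setOf_eq]
    constructor
    · intro hx
      refine ⟨fun i => x i.1, ?_, ?_⟩
      · exact hP x _ (fun i hi => by simp [hi]) hx
      · intro i hi; simp [hi]
    · rintro ⟨c, hc, hx⟩
      exact hP _ x (fun i hi => (hx i hi).symm) hc
  rw [key]
  constructor
  · exact isOpen_iUnion fun c => isOpen_iUnion fun _ => isOpen_cylinder _ _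
  · exact MeasurableSet.iUnion fun c => MeasurableSet.iUnion fun _ => measurableSet_cylinder _ _

end Stmt13

/-! ## The state machine defining the compact set K -/

namespace Stmt13

inductive Node where
  | read (k : ℕ)
  | paid (k : ℕ) (b : Bool)
  | dip (k : ℕ)
  | dip2 (k : ℕ)
  | pay (u : ℝ)
  | solid
  | dump

variable (r : ℝ)

/-- the dip sizes -/
noncomputable def eps (k : ℕ) : ℝ := min r (1 - r) / 2 / 2 ^ k

/-- first binary digit -/
noncomputable def dgt (u : ℝ) : ℝ := if (1:ℝ)/2 ≤ u then 1 else 0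

/-- transition function -/
noncomputable def tr : Node → Bool → Node
  | .read k, b => .paid k b
  | .paid k b, c =>
      if c then .pay (if b then r else r + eps r k)
      else if b then .read (k+1) else .dip k
  | .dip k, _ => .dip2 k
  | .dip2 k, c => if c then .pay (r - 2 * eps r k) else .read 0
  | .pay u, c => if c then .pay (2*u - dgt u) else (if (1:ℝ)/2 ≤ u then .solid else .dump)
  | .solid, _ => .solid
  | .dump, _ => .dump

/-- value attached to a node -/
noncomputable def nv : Node → ℝ
  | .read _ => r
  | .paid _ _ => r
  | .dip k => r - eps r k
  | .dip2 k => r - eps r k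
  | .pay u => u
  | .solid => 1
  | .dump => 0

/-- the state of the machine after reading the first n bits of x -/
noncomputable def state (x : ℕ → Bool) : ℕ → Node
  | 0 => .read 0
  | n+1 => tr r (state x n) (x n)

/-- The compact set. -/
def KK : Set (ℕ → Bool) := {x | ∀ n, state r x n ≠ .dump}

variable {r}

lemma eps_pos (hr0 : 0 < r) (hr1 : r < 1) (k : ℕ) : 0 < eps r k := by
  have : 0 < min r (1-r) := lt_min hr0 (by linarith)
  unfold eps; positivity

lemma eps_le (hr0 : 0 < r) (hr1 : r < 1) (k : ℕ) : eps r k ≤ min r (1 - r) / 2 := by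
  have : 0 < min r (1-r) := lt_min hr0 (by linarith)
  unfold eps
  apply div_le_self (by positivity)
  exact one_le_pow₀ (by norm_num)

lemma eps_antitone (hr0 : 0 < r) (hr1 : r < 1) {j k : ℕ} (h : j ≤ k) : eps r k ≤ eps r j := by
  have hmin : 0 < min r (1-r) := lt_min hr0 (by linarith)
  unfold eps
  gcongr
  · linarith

lemma eps_lt_of (hr0 : 0 < r) (hr1 : r < 1) {δ : ℝ} (hδ : 0 < δ) : ∃ j, eps r j < δ := by
  obtain ⟨j, hj⟩ := pow_unbounded_of_one_lt (min r (1-r) / 2 / δ) (show (1:ℝ) < 2 by norm_num)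
  refine ⟨j, ?_⟩
  unfold eps
  rw [div_lt_iff₀ (by positivity)]
  have h2 := (div_lt_iff₀ hδ).1 hj
  linarith

lemma two_eps_le (hr0 : 0 < r) (hr1 : r < 1) (k : ℕ) : 2 * eps r k ≤ r := by
  have h := eps_le hr0 hr1 k
  have h2 : min r (1-r) ≤ r := min_le_left _ _
  linarith

lemma eps_lt_one_sub (hr0 : 0 < r) (hr1 : r < 1) (k : ℕ) : r + eps r k < 1 := by
  have h := eps_le hr0 hr1 k
  have h2 : min r (1-r) ≤ 1 - r := min_le_right _ _
  have h3 : 0 < 1 - r := by linarith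
  linarith

/-- the martingale property of values -/
lemma nv_martingale (s : Node) :
    nv r s = (nv r (tr r s false) + nv r (tr r s true)) / 2 := by
  cases s with
  | read k => simp [tr, nv]
  | paid k b => cases b <;> simp [tr, nv] <;> ring
  | dip k => simp [tr, nv]
  | dip2 k => simp [tr, nv]; ring
  | pay u =>
      simp only [tr, dgt, Bool.false_eq_true, if_false, if_true]
      split_ifs with h <;> simp only [nv] <;> ring
  | solid => simp [tr, nv]
  | dump => simp [tr, nv]

/-- node invariant -/
def NodeOK : Node → Prop
  | .pay u => 0 ≤ u ∧ u < 1
  | _ => True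

lemma nodeOK_tr (hr0 : 0 < r) (hr1 : r < 1) {s : Node} (hs : NodeOK s) (b : Bool) :
    NodeOK (tr r s b) := by
  cases s with
  | read k => cases b <;> trivial
  | paid k b' =>
      cases b with
      | false => cases b' <;> simp [tr, NodeOK]
      | true =>
          cases b' with
          | false =>
              have h1 := eps_pos hr0 hr1 k
              have h2 := eps_lt_one_sub hr0 hr1 k
              simp only [tr, NodeOK, Bool.false_eq_true, if_false, if_true]
              constructor <;> linarith
          | true =>
              simp only [tr, NodeOK, Bool.false_eq_true, if_false, if_true]
              constructor <;> linarith
  | dip k => cases b <;> trivial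
  | dip2 k =>
      cases b with
      | false => simp [tr, NodeOK]
      | true =>
          have h1 := two_eps_le hr0 hr1 k
          have h2 := eps_pos hr0 hr1 k
          simp only [tr, NodeOK, Bool.false_eq_true, if_false, if_true]
          constructor <;> linarith
  | pay u =>
      obtain ⟨h0, h1⟩ := hs
      cases b with
      | false =>
          simp only [tr, Bool.false_eq_true, if_false]
          split_ifs <;> trivial
      | true =>
          simp only [tr, NodeOK, dgt, Bool.false_eq_true, if_false, if_true]
          split_ifs with h <;> constructor <;> linarith
  | solid => cases b <;> trivial
  | dump => cases b <;> trivial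

lemma state_nodeOK (hr0 : 0 < r) (hr1 : r < 1) (x : ℕ → Bool) (n : ℕ) :
    NodeOK (state r x n) := by
  induction n with
  | zero => trivial
  | succ n ih => exact nodeOK_tr hr0 hr1 ih _

lemma nv_mem (hr0 : 0 < r) (hr1 : r < 1) {s : Node} (hs : NodeOK s) :
    0 ≤ nv r s ∧ nv r s ≤ 1 := by
  cases s with
  | read k => exact ⟨le_of_lt hr0, le_of_lt hr1⟩
  | paid k b => exact ⟨le_of_lt hr0, le_of_lt hr1⟩
  | dip k =>
      have h1 := eps_pos hr0 hr1 k
      have h2 := two_eps_le hr0 hr1 k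
      simp only [nv]; constructor <;> linarith
  | dip2 k =>
      have h1 := eps_pos hr0 hr1 k
      have h2 := two_eps_le hr0 hr1 k
      simp only [nv]; constructor <;> linarith
  | pay u => exact ⟨hs.1, le_of_lt hs.2⟩
  | solid => simp [nv]
  | dump => simp [nv]

/-- prefix determinism -/
lemma state_congr {x y : ℕ → Bool} {n : ℕ} (h : ∀ i < n, x i = y i) (r : ℝ) :
    state r x n = state r y n := by
  induction n with
  | zero => rfl
  | succ n ih =>
      have h1 : state r x n = state r y n := ih (fun i hi => h i (Nat.lt_succ_of_lt hi))
      show tr r (state r x n) (x n) = tr r (state r y n) (y n)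
      rw [h1, h n (Nat.lt_succ_self n)]

lemma state_update (x : ℕ → Bool) (n : ℕ) (b : Bool) (r : ℝ) :
    state r (Function.update x n b) (n+1) = tr r (state r x n) b := by
  have h1 : state r (Function.update x n b) n = state r x n :=
    state_congr (fun i hi => Function.update_of_ne (Nat.ne_of_lt hi) _ _) r
  show tr r (state r (Function.update x n b) n) (Function.update x n b n) = _
  rw [h1, Function.update_self]

/-- dump and solid are absorbing -/
lemma dump_absorb {x : ℕ → Bool} {n m : ℕ} (h : n ≤ m) (hd : state r x n = .dump) :
    state r x m = .dump := by
  induction m, h using Nat.le_induction with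
  | base => exact hd
  | succ m hm ih =>
      show tr r (state r x m) (x m) = .dump
      rw [ih]; cases x m <;> rfl

lemma solid_absorb {x : ℕ → Bool} {n m : ℕ} (h : n ≤ m) (hd : state r x n = .solid) :
    state r x m = .solid := by
  induction m, h using Nat.le_induction with
  | base => exact hd
  | succ m hm ih =>
      show tr r (state r x m) (x m) = .solid
      rw [ih]; cases x m <;> rfl

lemma not_dump_of_lt {x : ℕ → Bool} {n m : ℕ} (h : n ≤ m) (hd : state r x m ≠ .dump) :
    state r x n ≠ .dump := fun hc => hd (dump_absorb h hc)

end Stmt13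

/-! ## The measure computation -/

namespace Stmt13

section Meas

variable {μ : Measure (ℕ → Bool)} {r : ℝ}

lemma KK_eq_iInter : KK r = ⋂ n, {x | state r x n ≠ .dump} := by
  ext x; simp only [KK, mem_iInter, mem_setOf_eq]

lemma prefix_state (n : ℕ) (Q : Node → Prop) :
    IsOpen {x | Q (state r x n)} ∧ MeasurableSet {x | Q (state r x n)} := by
  apply prefix_set_basic (fun x => Q (state r x n)) n
  intro x y h hx
  rwa [state_congr h r] at hx

lemma measurableSet_KK : MeasurableSet (KK r) := by
  rw [KK_eq_iInter]
  exact MeasurableSet.iInter fun n => (prefix_state n (fun s => s ≠ .dump)).2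

lemma isClosed_KK : IsClosed (KK r) := by
  rw [KK_eq_iInter]
  apply isClosed_iInter
  intro n
  have h := (prefix_state (r := r) n (fun s => s = .dump)).1
  have he : {x | state r x n ≠ Node.dump} = {x | state r x n = Node.dump}ᶜ := rfl
  rw [he]
  exact h.isClosed_compl

lemma isCompact_KK : IsCompact (KK r) := isClosed_KK.isCompact

lemma cyl_toReal (hμ : ∀ (x : ℕ → Bool) (n : ℕ), μ (cylinder x n) = 1 / 2 ^ n)
    (x : ℕ → Bool) (n : ℕ) : (μ (cylinder x n)).toReal = 1 / 2 ^ n := by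
  rw [hμ x n, ENNReal.toReal_div]
  norm_num

lemma cyl_ne_top (hμ : ∀ (x : ℕ → Bool) (n : ℕ), μ (cylinder x n) = 1 / 2 ^ n)
    (x : ℕ → Bool) (n : ℕ) : μ (cylinder x n) ≠ ⊤ := by
  rw [hμ x n]
  simp [ENNReal.div_eq_top]

lemma KK_cyl_ne_top (hμ : ∀ (x : ℕ → Bool) (n : ℕ), μ (cylinder x n) = 1 / 2 ^ n)
    (x : ℕ → Bool) (n : ℕ) : μ (KK r ∩ cylinder x n) ≠ ⊤ :=
  fun h => cyl_ne_top hμ x n (eq_top_iff.2 (h ▸ measure_mono inter_subset_right))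

lemma densSeq_nonneg (x : ℕ → Bool) (n : ℕ) : 0 ≤ densSeq μ (KK r) x n := by
  unfold densSeq; positivity

lemma densSeq_le_one (hμ : ∀ (x : ℕ → Bool) (n : ℕ), μ (cylinder x n) = 1 / 2 ^ n)
    (x : ℕ → Bool) (n : ℕ) : densSeq μ (KK r) x n ≤ 1 := by
  unfold densSeq
  have h1 : (μ (KK r ∩ cylinder x n)).toReal ≤ (μ (cylinder x n)).toReal :=
    ENNReal.toReal_mono (cyl_ne_top hμ x n) (measure_mono inter_subset_right)
  rw [cyl_toReal hμ] at h1
  calc (2:ℝ)^n * (μ (KK r ∩ cylinder x n)).toReal ≤ 2^n * (1/2^n) := by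
        apply mul_le_mul_of_nonneg_left h1 (by positivity)
  _ = 1 := by field_simp

/-- the martingale step -/
lemma densSeq_step (hμ : ∀ (x : ℕ → Bool) (n : ℕ), μ (cylinder x n) = 1 / 2 ^ n)
    (x : ℕ → Bool) (n : ℕ) :
    densSeq μ (KK r) x n = (densSeq μ (KK r) (Function.update x n false) (n+1)
      + densSeq μ (KK r) (Function.update x n true) (n+1)) / 2 := by
  have hsplit : μ (KK r ∩ cylinder x n) =
      μ (KK r ∩ cylinder (Function.update x n false) (n+1)) +
      μ (KK r ∩ cylinder (Function.update x n true) (n+1)) := by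
    rw [cylinder_split x n, inter_union_distrib_left]
    apply measure_union
    · exact (cylinder_split_disjoint x n).mono inter_subset_right inter_subset_right
    · exact measurableSet_KK.inter (measurableSet_cylinder _ _)
  unfold densSeq
  rw [hsplit, ENNReal.toReal_add (KK_cyl_ne_top hμ _ _) (KK_cyl_ne_top hμ _ _), pow_succ]
  ring

/-- dump: empty trace -/
lemma kill_dump (x : ℕ → Bool) (n : ℕ) (h : state r x n = .dump) :
    densSeq μ (KK r) x n = 0 := by
  have he : KK r ∩ cylinder x n = ∅ := by
    ext y
    simp only [mem_inter_iff, mem_empty_iff_false, iff_false, not_and]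
    intro hy hc
    exact hy n (by rwa [state_congr (fun i hi => hc i hi) r])
  unfold densSeq
  rw [he]
  simp

/-- solid: full trace -/
lemma kill_solid (hμ : ∀ (x : ℕ → Bool) (n : ℕ), μ (cylinder x n) = 1 / 2 ^ n)
    (x : ℕ → Bool) (n : ℕ) (h : state r x n = .solid) :
    densSeq μ (KK r) x n = 1 := by
  have hsub : cylinder x n ⊆ KK r := by
    intro y hy m
    have hyx : state r y n = state r x n := state_congr (fun i hi => hy i hi) r
    rcases le_or_gt m n with hm | hm
    · intro hd
      have hc : state r y n = .dump := dump_absorb hm hd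
      rw [hyx, h] at hc
      exact Node.noConfusion hc
    · have hc : state r y m = .solid := solid_absorb (le_of_lt hm) (by rw [hyx, h])
      rw [hc]
      exact fun hc' => Node.noConfusion hc'
  have he : KK r ∩ cylinder x n = cylinder x n := inter_eq_self_of_subset_right hsub
  unfold densSeq
  rw [he, cyl_toReal hμ]
  field_simp

/-! ### the decay bounds -/

noncomputable def eo : ℕ → ℝ × ℝ
  | 0 => (1, 1)
  | m+1 => ((eo m).2, ((eo m).1 + (1/2)^m)/2)

noncomputable def ee (m : ℕ) : ℝ := (eo m).1
noncomputable def oo (m : ℕ) : ℝ := (eo m).2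

lemma ee_succ (m : ℕ) : ee (m+1) = oo m := rfl
lemma oo_succ (m : ℕ) : oo (m+1) = (ee m + (1/2)^m)/2 := rfl

noncomputable def wB : Node → ℕ → ℝ
  | .solid, _ => 0
  | .dump, _ => 0
  | .pay _, m => (1/2)^m
  | .read _, m => ee m
  | .dip _, m => ee m
  | .paid _ _, m => oo m
  | .dip2 _, m => oo m

lemma wB_step (s : Node) (m : ℕ) :
    (wB (tr r s false) m + wB (tr r s true) m) / 2 ≤ wB s (m+1) := by
  cases s with
  | read k =>
      show (oo m + oo m)/2 ≤ ee (m+1)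
      rw [ee_succ]; linarith
  | paid k b =>
      cases b <;>
      · show (ee m + (1/2)^m)/2 ≤ oo (m+1)
        rw [oo_succ]
  | dip k =>
      show (oo m + oo m)/2 ≤ ee (m+1)
      rw [ee_succ]; linarith
  | dip2 k =>
      show (ee m + (1/2)^m)/2 ≤ oo (m+1)
      rw [oo_succ]
  | pay u =>
      have h2 : wB (tr r (.pay u) true) m = (1/2)^m := rfl
      have h1 : wB (tr r (.pay u) false) m = 0 := by
        show wB (if (1:ℝ)/2 ≤ u then .solid else .dump) m = 0
        split_ifs <;> rfl
      rw [h1, h2]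
      show (0 + (1/2)^m)/2 ≤ (1/2)^(m+1)
      rw [pow_succ]
      linarith
  | solid => show (0+0)/2 ≤ (0:ℝ); norm_num
  | dump => show (0+0)/2 ≤ (0:ℝ); norm_num

/-- the master bound -/
lemma abs_D_le (hμ : ∀ (x : ℕ → Bool) (n : ℕ), μ (cylinder x n) = 1 / 2 ^ n)
    (hr0 : 0 < r) (hr1 : r < 1) (m : ℕ) (x : ℕ → Bool) (n : ℕ) :
    |densSeq μ (KK r) x n - nv r (state r x n)| ≤ wB (state r x n) m := by
  induction m generalizing x n with
  | zero =>
      have h1 := densSeq_nonneg (μ := μ) (r := r) x n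
      have h2 := densSeq_le_one (r := r) hμ x n
      have h3 := nv_mem hr0 hr1 (state_nodeOK hr0 hr1 x n)
      cases hs : state r x n with
      | solid =>
          rw [kill_solid hμ x n hs]
          show |1 - (1:ℝ)| ≤ 0
          simp
      | dump =>
          rw [kill_dump x n hs]
          show |0 - (0:ℝ)| ≤ 0
          simp
      | read k =>
          rw [hs] at h3
          have hw : wB (Node.read k) 0 = 1 := rfl
          rw [hw, abs_le]; constructor <;> linarith [h3.1, h3.2]
      | paid k b =>
          rw [hs] at h3
          have hw : wB (Node.paid k b) 0 = 1 := rfl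
          rw [hw, abs_le]; constructor <;> linarith [h3.1, h3.2]
      | dip k =>
          rw [hs] at h3
          have hw : wB (Node.dip k) 0 = 1 := rfl
          rw [hw, abs_le]; constructor <;> linarith [h3.1, h3.2]
      | dip2 k =>
          rw [hs] at h3
          have hw : wB (Node.dip2 k) 0 = 1 := rfl
          rw [hw, abs_le]; constructor <;> linarith [h3.1, h3.2]
      | pay u =>
          rw [hs] at h3
          have hw : wB (Node.pay u) 0 = 1 := rfl
          rw [hw, abs_le]; constructor <;> linarith [h3.1, h3.2]
  | succ m ih =>
      have hF := ih (Function.update x n false) (n+1)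
      have hT := ih (Function.update x n true) (n+1)
      rw [state_update] at hF hT
      rw [densSeq_step hμ x n, nv_martingale (r := r) (state r x n)]
      set dsF := densSeq μ (KK r) (Function.update x n false) (n+1)
      set dsT := densSeq μ (KK r) (Function.update x n true) (n+1)
      set nvF := nv r (tr r (state r x n) false)
      set nvT := nv r (tr r (state r x n) true)
      have he : (dsF + dsT)/2 - (nvF + nvT)/2 = ((dsF - nvF) + (dsT - nvT))/2 := by ring
      rw [he]
      calc |((dsF - nvF) + (dsT - nvT))/2| ≤ (|dsF - nvF| + |dsT - nvT|)/2 := by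
            rw [abs_div, abs_two]
            gcongr
            exact abs_add_le _ _
      _ ≤ (wB (tr r (state r x n) false) m + wB (tr r (state r x n) true) m)/2 := by
            gcongr
      _ ≤ wB (state r x n) (m+1) := wB_step _ m

end Meas

end Stmt13

/-! ## Conclusion of the measure computation -/

namespace Stmt13

section Meas2

variable {μ : Measure (ℕ → Bool)} {r : ℝ}

lemma ee_bound : ∀ j : ℕ, ee (2*j) ≤ ((j:ℝ)+1)*(1/2)^j ∧ ee (2*j+1) ≤ ((j:ℝ)+1)*(1/2)^j := by
  intro j
  induction j with
  | zero =>
      constructor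
      · show (1:ℝ) ≤ _; norm_num
      · show (1:ℝ) ≤ _; norm_num
  | succ j ih =>
      have hpow : ((1:ℝ)/2)^(2*j) ≤ (1/2)^j :=
        pow_le_pow_of_le_one (by norm_num) (by norm_num) (by omega)
      have hpow' : ((1:ℝ)/2)^(2*j+1) ≤ (1/2)^j :=
        pow_le_pow_of_le_one (by norm_num) (by norm_num) (by omega)
      have key : ∀ a : ℝ, a ≤ ((j:ℝ)+1)*(1/2)^j → ∀ b : ℝ, b ≤ (1/2)^j →
          (a + b)/2 ≤ ((j:ℝ)+1+1)*(1/2)^(j+1) := by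
        intro a ha b hb
        have : ((j:ℝ)+1+1)*(1/2)^(j+1) = (((j:ℝ)+1)*(1/2)^j + (1/2)^j)/2 := by
          rw [pow_succ]; ring
        rw [this]
        linarith
      constructor
      · have e1 : ee (2*(j+1)) = (ee (2*j) + (1/2)^(2*j))/2 := by
          have : 2*(j+1) = (2*j+1)+1 := by ring
          rw [this, ee_succ, oo_succ]
        rw [e1]
        push_cast
        exact key _ ih.1 _ hpow
      · have e1 : ee (2*(j+1)+1) = (ee (2*j+1) + (1/2)^(2*j+1))/2 := by
          have h2 : 2*(j+1)+1 = ((2*j+1)+1)+1 := by ring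
          rw [h2, ee_succ, oo_succ]
        rw [e1]
        push_cast
        exact key _ ih.2 _ hpow'

lemma tendsto_jpow : Tendsto (fun j : ℕ => ((j:ℝ)+1)*(1/2)^j) atTop (𝓝 0) := by
  have h1 : Summable (fun n : ℕ => (n:ℝ)^1 * (1/2)^n) :=
    summable_pow_mul_geometric_of_norm_lt_one 1 (by rw [Real.norm_eq_abs, abs_of_pos] <;> norm_num)
  have h2 := h1.tendsto_atTop_zero
  have h3 : Tendsto (fun n : ℕ => ((1:ℝ)/2)^n) atTop (𝓝 0) :=
    tendsto_pow_atTop_nhds_zero_of_lt_one (by norm_num) (by norm_num)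
  have h4 := h2.add h3
  simp only [add_zero] at h4
  convert h4 using 2 with j
  push_cast
  ring

/-- **The key identity**: the density ratio sequence is given by the node values. -/
theorem densSeq_eq (hμ : ∀ (x : ℕ → Bool) (n : ℕ), μ (cylinder x n) = 1 / 2 ^ n)
    (hr0 : 0 < r) (hr1 : r < 1) (x : ℕ → Bool) (n : ℕ) :
    densSeq μ (KK r) x n = nv r (state r x n) := by
  have hb : ∀ m, |densSeq μ (KK r) x n - nv r (state r x n)| ≤ wB (state r x n) m :=
    fun m => abs_D_le hμ hr0 hr1 m x n
  have h0 : ∀ δ : ℝ, 0 < δ → |densSeq μ (KK r) x n - nv r (state r x n)| ≤ 0 + δ := by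
    intro δ hδ
    rw [zero_add]
    obtain ⟨J, hJ⟩ := (tendsto_jpow.eventually_lt_const hδ).exists_forall_of_atTop
    have hJ0 : ((J:ℝ)+1)*(1/2)^J < δ := hJ J le_rfl
    have hJ1 : ((J:ℝ)+1+1)*(1/2)^(J+1) < δ := by
      have := hJ (J+1) (by omega)
      push_cast at this ⊢
      linarith
    cases hs : state r x n with
    | solid => have := hb 0; rw [hs] at this; exact le_trans this (le_of_lt hδ)
    | dump => have := hb 0; rw [hs] at this; exact le_trans this (le_of_lt hδ)
    | pay u =>
        have h := hb J; rw [hs] at h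
        have hw : wB (Node.pay u) J = (1/2)^J := rfl
        rw [hw] at h
        have : ((1:ℝ)/2)^J ≤ ((J:ℝ)+1)*(1/2)^J := by
          have : (1:ℝ) ≤ (J:ℝ)+1 := by linarith [Nat.cast_nonneg (α := ℝ) J]
          nlinarith [pow_nonneg (show (0:ℝ) ≤ 1/2 by norm_num) J]
        linarith
    | read k =>
        have h := hb (2*J); rw [hs] at h
        have hw : wB (Node.read k) (2*J) = ee (2*J) := rfl
        rw [hw] at h
        linarith [(ee_bound J).1]
    | dip k =>
        have h := hb (2*J); rw [hs] at h
        have hw : wB (Node.dip k) (2*J) = ee (2*J) := rfl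
        rw [hw] at h
        linarith [(ee_bound J).1]
    | paid k b =>
        have h := hb (2*J+1); rw [hs] at h
        have hw : wB (Node.paid k b) (2*J+1) = ee (2*J+2) := rfl
        rw [hw] at h
        have h2 : ee (2*(J+1)) ≤ ((J:ℝ)+1+1)*(1/2)^(J+1) := by
          have := (ee_bound (J+1)).1
          push_cast at this
          convert this using 2 <;> push_cast <;> ring
        have h3 : 2*(J+1) = 2*J+2 := by ring
        rw [h3] at h2
        linarith
    | dip2 k =>
        have h := hb (2*J+1); rw [hs] at h
        have hw : wB (Node.dip2 k) (2*J+1) = ee (2*J+2) := rfl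
        rw [hw] at h
        have h2 : ee (2*(J+1)) ≤ ((J:ℝ)+1+1)*(1/2)^(J+1) := by
          have := (ee_bound (J+1)).1
          push_cast at this
          convert this using 2 <;> push_cast <;> ring
        have h3 : 2*(J+1) = 2*J+2 := by ring
        rw [h3] at h2
        linarith
  have habs : |densSeq μ (KK r) x n - nv r (state r x n)| ≤ 0 :=
    le_of_forall_pos_le_add h0
  have h5 := abs_le.1 habs
  linarith [abs_nonneg (densSeq μ (KK r) x n - nv r (state r x n)), abs_le.1 habs]

end Meas2

end Stmt13

/-! ## Trajectory analysis -/

namespace Stmt13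

def Spine : Node → Prop
  | .read _ => True
  | .paid _ _ => True
  | .dip _ => True
  | .dip2 _ => True
  | _ => False

def SpineF (r : ℝ) (x : ℕ → Bool) : Prop := ∀ n, Spine (state r x n)

def Conv (r : ℝ) (x : ℕ → Bool) : Prop :=
  ∀ j, ∃ N, ∀ n, N ≤ n → ∀ k ≤ j, state r x n ≠ .dip k ∧ state r x n ≠ .dip2 k

section Traj

variable {r : ℝ} {x : ℕ → Bool}

lemma spine_bit_false_paid {n k b} (sf : SpineF r x) (h : state r x n = .paid k b) :
    x n = false := by
  by_contra hb
  rw [Bool.not_eq_false] at hb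
  have h2 : state r x (n+1) = .pay (if b then r else r + eps r k) := by
    show tr r (state r x n) (x n) = _
    rw [h, hb]
    rfl
  have := sf (n+1)
  rw [h2] at this
  exact this

lemma spine_bit_false_dip2 {n k} (sf : SpineF r x) (h : state r x n = .dip2 k) :
    x n = false := by
  by_contra hb
  rw [Bool.not_eq_false] at hb
  have h2 : state r x (n+1) = .pay (r - 2 * eps r k) := by
    show tr r (state r x n) (x n) = _
    rw [h, hb]
    rfl
  have := sf (n+1)
  rw [h2] at this
  exact this

lemma exists_read (sf : SpineF r x) (n : ℕ) :
    ∃ m, n ≤ m ∧ ∃ k, state r x m = .read k := by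
  cases hs : state r x n with
  | read k => exact ⟨n, le_rfl, k, hs⟩
  | paid k b =>
      have hb := spine_bit_false_paid sf hs
      cases b with
      | true =>
          refine ⟨n+1, by omega, k+1, ?_⟩
          show tr r (state r x n) (x n) = _
          rw [hs, hb]; rfl
      | false =>
          have h1 : state r x (n+1) = .dip k := by
            show tr r (state r x n) (x n) = _
            rw [hs, hb]; rfl
          have h2 : state r x (n+2) = .dip2 k := by
            show tr r (state r x (n+1)) (x (n+1)) = _
            rw [h1]; cases x (n+1) <;> rfl
          have hb2 := spine_bit_false_dip2 sf h2
          refine ⟨n+3, by omega, 0, ?_⟩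
          show tr r (state r x (n+2)) (x (n+2)) = _
          rw [h2, hb2]; rfl
  | dip k =>
      have h2 : state r x (n+1) = .dip2 k := by
        show tr r (state r x n) (x n) = _
        rw [hs]; cases x n <;> rfl
      have hb2 := spine_bit_false_dip2 sf h2
      refine ⟨n+2, by omega, 0, ?_⟩
      show tr r (state r x (n+1)) (x (n+1)) = _
      rw [h2, hb2]; rfl
  | dip2 k =>
      have hb2 := spine_bit_false_dip2 sf hs
      refine ⟨n+1, by omega, 0, ?_⟩
      show tr r (state r x n) (x n) = _
      rw [hs, hb2]; rfl
  | pay u => exact absurd (hs ▸ sf n) (by simp [Spine])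
  | solid => exact absurd (hs ▸ sf n) (by simp [Spine])
  | dump => exact absurd (hs ▸ sf n) (by simp [Spine])

lemma vv_le_r (hr0 : 0 < r) (hr1 : r < 1) {n : ℕ} (sp : Spine (state r x n)) :
    nv r (state r x n) ≤ r := by
  cases hs : state r x n with
  | read k => exact le_of_eq rfl
  | paid k b => exact le_of_eq rfl
  | dip k => have := eps_pos hr0 hr1 k; show r - eps r k ≤ r; linarith
  | dip2 k => have := eps_pos hr0 hr1 k; show r - eps r k ≤ r; linarith
  | pay u => rw [hs] at sp; exact sp.elim
  | solid => rw [hs] at sp; exact sp.elim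
  | dump => rw [hs] at sp; exact sp.elim

lemma tendsto_of_conv (hr0 : 0 < r) (hr1 : r < 1) (sf : SpineF r x) (hc : Conv r x) :
    Tendsto (fun n => nv r (state r x n)) atTop (𝓝 r) := by
  rw [Metric.tendsto_atTop]
  intro ε hε
  obtain ⟨j, hj⟩ := eps_lt_of hr0 hr1 hε
  obtain ⟨N, hN⟩ := hc j
  refine ⟨N, fun n hn => ?_⟩
  rw [Real.dist_eq]
  cases hs : state r x n with
  | read k => show |r - r| < ε; simpa using hε
  | paid k b => show |r - r| < ε; simpa using hε
  | dip k =>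
      have hk : ¬ k ≤ j := fun hkj => ((hN n hn k hkj).1 hs)
      have h5 : eps r k ≤ eps r j := eps_antitone hr0 hr1 (by omega)
      show |r - eps r k - r| < ε
      have h6 : r - eps r k - r = -(eps r k) := by ring
      rw [h6, abs_neg, abs_of_pos (eps_pos hr0 hr1 k)]
      linarith
  | dip2 k =>
      have hk : ¬ k ≤ j := fun hkj => ((hN n hn k hkj).2 hs)
      have h5 : eps r k ≤ eps r j := eps_antitone hr0 hr1 (by omega)
      show |r - eps r k - r| < ε
      have h6 : r - eps r k - r = -(eps r k) := by ring
      rw [h6, abs_neg, abs_of_pos (eps_pos hr0 hr1 k)]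
      linarith
  | pay u => exact absurd (hs ▸ sf n) (by simp [Spine])
  | solid => exact absurd (hs ▸ sf n) (by simp [Spine])
  | dump => exact absurd (hs ▸ sf n) (by simp [Spine])

lemma no_limit_of_not_conv (hr0 : 0 < r) (hr1 : r < 1) (sf : SpineF r x) (hc : ¬ Conv r x)
    (L : ℝ) : ¬ Tendsto (fun n => nv r (state r x n)) atTop (𝓝 L) := by
  intro ht
  have hLr : L = r := by
    by_contra hne
    have hpos : 0 < |r - L| := abs_pos.2 (sub_ne_zero.2 (fun h => hne (by linarith)))
    rw [Metric.tendsto_atTop] at ht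
    obtain ⟨N, hN⟩ := ht _ hpos
    obtain ⟨m, hm1, k, hk⟩ := exists_read sf N
    have h7 := hN m hm1
    rw [Real.dist_eq, hk] at h7
    exact lt_irrefl _ h7
  rw [hLr] at ht
  unfold Conv at hc
  push_neg at hc
  obtain ⟨j, hj⟩ := hc
  rw [Metric.tendsto_atTop] at ht
  obtain ⟨N, hN⟩ := ht (eps r j) (eps_pos hr0 hr1 j)
  obtain ⟨n, hn, k, hkj, hdip⟩ := hj N
  have heps : eps r j ≤ eps r k := eps_antitone hr0 hr1 hkj
  have hvv : |nv r (state r x n) - r| = eps r k := by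
    by_cases hd : state r x n = Node.dip k
    · rw [hd]
      show |r - eps r k - r| = _
      have h6 : r - eps r k - r = -(eps r k) := by ring
      rw [h6, abs_neg, abs_of_pos (eps_pos hr0 hr1 k)]
    · rw [hdip hd]
      show |r - eps r k - r| = _
      have h6 : r - eps r k - r = -(eps r k) := by ring
      rw [h6, abs_neg, abs_of_pos (eps_pos hr0 hr1 k)]
  have h8 := hN n hn
  rw [Real.dist_eq, hvv] at h8
  linarith

end Traj

end Stmt13

/-! ## Pay trajectories have no limit in (0,1) and do not converge to 1 -/

namespace Stmt13

section Traj2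

variable {r : ℝ} {x : ℕ → Bool}

lemma pay_forever (hns : ∀ m, state r x m ≠ .solid) (hnd : ∀ m, state r x m ≠ .dump)
    {n : ℕ} {u : ℝ} (h : state r x n = .pay u) :
    ∀ m, n ≤ m → ∃ u', state r x m = .pay u' := by
  intro m hm
  induction m, hm using Nat.le_induction with
  | base => exact ⟨u, h⟩
  | succ m hm ih =>
      obtain ⟨u', hu'⟩ := ih
      cases hb : x m with
      | true =>
          refine ⟨2*u' - dgt u', ?_⟩
          show tr r (state r x m) (x m) = _
          rw [hu', hb]; rfl
      | false =>
          exfalso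
          have h2 : state r x (m+1) = (if (1:ℝ)/2 ≤ u' then Node.solid else Node.dump) := by
            show tr r (state r x m) (x m) = _
            rw [hu', hb]; rfl
          split_ifs at h2 with h3
          · exact hns (m+1) h2
          · exact hnd (m+1) h2

lemma pay_rec {n : ℕ} {u u' : ℝ} (h : state r x n = .pay u)
    (h' : state r x (n+1) = .pay u') : u' = 2*u - dgt u := by
  cases hb : x n with
  | true =>
      have h2 : state r x (n+1) = .pay (2*u - dgt u) := by
        show tr r (state r x n) (x n) = _; rw [h, hb]; rfl
      have h3 := h'.symm.trans h2
      injection h3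
  | false =>
      exfalso
      have h2 : state r x (n+1) = (if (1:ℝ)/2 ≤ u then Node.solid else Node.dump) := by
        show tr r (state r x n) (x n) = _; rw [h, hb]; rfl
      rw [h'] at h2
      split_ifs at h2 <;> exact Node.noConfusion h2

lemma pay_no_limit (hr0 : 0 < r) (hr1 : r < 1)
    (hns : ∀ m, state r x m ≠ .solid) (hnd : ∀ m, state r x m ≠ .dump)
    {n₀ : ℕ} {u₀ : ℝ} (h : state r x n₀ = .pay u₀) :
    (∀ L, 0 < L → L < 1 → ¬ Tendsto (fun n => nv r (state r x n)) atTop (𝓝 L)) ∧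
      ¬ Tendsto (fun n => nv r (state r x n)) atTop (𝓝 1) := by
  set f : ℕ → ℝ := fun m => nv r (state r x m) with hf
  have hpay : ∀ m, n₀ ≤ m → ∃ u, state r x m = .pay u := pay_forever hns hnd h
  have hrec : ∀ m, n₀ ≤ m → f (m+1) = 2 * f m - dgt (f m) := by
    intro m hm
    obtain ⟨u, hu⟩ := hpay m hm
    obtain ⟨u', hu'⟩ := hpay (m+1) (by omega)
    have := pay_rec hu hu'
    simp only [hf, hu, hu']
    exact this
  have hbound : ∀ m, n₀ ≤ m → 0 ≤ f m ∧ f m < 1 := by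
    intro m hm
    obtain ⟨u, hu⟩ := hpay m hm
    have hok := state_nodeOK (by exact hr0) hr1 x m
    rw [hu] at hok
    simp only [hf, hu]
    exact hok
  constructor
  · intro L hL0 hL1 ht
    have h1 : Tendsto (fun m => 2 * f m - f (m+1)) atTop (𝓝 (2*L - L)) :=
      (ht.const_mul 2).sub (ht.comp (tendsto_add_atTop_nat 1))
    have h2 : (fun m => dgt (f m)) =ᶠ[atTop] (fun m => 2 * f m - f (m+1)) := by
      filter_upwards [eventually_ge_atTop n₀] with m hm
      have := hrec m hm
      linarith
    have hd : Tendsto (fun m => dgt (f m)) atTop (𝓝 L) := by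
      have h3 : 2*L - L = L := by ring
      rw [h3] at h1
      exact h1.congr' h2.symm
    rw [Metric.tendsto_atTop] at hd
    obtain ⟨N, hN⟩ := hd (min L (1-L)) (lt_min hL0 (by linarith))
    have h4 := hN N le_rfl
    rw [Real.dist_eq] at h4
    unfold dgt at h4
    split_ifs at h4
    · have h5 : min L (1-L) ≤ 1 - L := min_le_right _ _
      rw [abs_of_nonneg (by linarith)] at h4
      linarith
    · have h5 : min L (1-L) ≤ L := min_le_left _ _
      rw [zero_sub, abs_neg, abs_of_pos hL0] at h4
      linarith
  · intro ht
    rw [Metric.tendsto_atTop] at ht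
    obtain ⟨N, hN⟩ := ht (1/4) (by norm_num)
    set M := max N n₀ with hM
    have hfM : ∀ i, 3/4 < f (M + i) := by
      intro i
      have := hN (M + i) (le_trans (le_max_left N n₀) (Nat.le_add_right M i))
      rw [Real.dist_eq] at this
      have h6 := (hbound (M+i) (le_trans (le_max_right N n₀) (Nat.le_add_right M i))).2
      rw [abs_of_nonpos (by linarith)] at this
      linarith
    have hgeo : ∀ i, 1 - f (M + i) = 2^i * (1 - f M) := by
      intro i
      induction i with
      | zero => simp
      | succ i ih =>
          have h7 : (1:ℝ)/2 ≤ f (M+i) := by linarith [hfM i]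
          have h8 := hrec (M+i) (le_trans (le_max_right N n₀) (Nat.le_add_right M i))
          unfold dgt at h8
          rw [if_pos h7] at h8
          have h9 : M + (i+1) = (M + i) + 1 := by omega
          rw [h9, h8, pow_succ]
          linarith [ih]
    have hflt : f M < 1 := (hbound M (le_max_right _ _)).2
    obtain ⟨i, hi⟩ := pow_unbounded_of_one_lt ((1/4) / (1 - f M)) (show (1:ℝ) < 2 by norm_num)
    have h10 : (1:ℝ)/4 < 2^i * (1 - f M) := by
      rw [div_lt_iff₀ (by linarith)] at hi
      linarith
    have := hgeo i
    have := hfM i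
    linarith

end Traj2

end Stmt13

/-! ## The three sets -/

namespace Stmt13

section Sets

variable {μ : Measure (ℕ → Bool)} {r : ℝ}

lemma tendsto_solid {x : ℕ → Bool} {n : ℕ} (h : state r x n = .solid) :
    Tendsto (fun m => nv r (state r x m)) atTop (𝓝 1) := by
  apply tendsto_atTop_of_eventually_const (i₀ := n)
  intro m hm
  rw [solid_absorb hm h]
  rfl

lemma tendsto_dump {x : ℕ → Bool} {n : ℕ} (h : state r x n = .dump) :
    Tendsto (fun m => nv r (state r x m)) atTop (𝓝 0) := by
  apply tendsto_atTop_of_eventually_const (i₀ := n)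
  intro m hm
  rw [dump_absorb hm h]
  rfl

lemma classify (x : ℕ → Bool) :
    (∃ n, state r x n = .solid) ∨ (∃ n, state r x n = .dump) ∨
    ((∀ n, state r x n ≠ .solid) ∧ (∀ n, state r x n ≠ .dump) ∧ ∃ n u, state r x n = .pay u) ∨
    SpineF r x := by
  by_cases h1 : ∃ n, state r x n = .solid
  · exact Or.inl h1
  by_cases h2 : ∃ n, state r x n = .dump
  · exact Or.inr (Or.inl h2)
  by_cases h3 : SpineF r x
  · exact Or.inr (Or.inr (Or.inr h3))
  push_neg at h1 h2
  refine Or.inr (Or.inr (Or.inl ⟨h1, h2, ?_⟩))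
  unfold SpineF at h3
  push_neg at h3
  obtain ⟨n, hn⟩ := h3
  cases hs : state r x n with
  | read k => exact absurd (show Spine (state r x n) by rw [hs]; trivial) hn
  | paid k b => exact absurd (show Spine (state r x n) by rw [hs]; trivial) hn
  | dip k => exact absurd (show Spine (state r x n) by rw [hs]; trivial) hn
  | dip2 k => exact absurd (show Spine (state r x n) by rw [hs]; trivial) hn
  | pay u => exact ⟨n, u, hs⟩
  | solid => exact absurd hs (h1 n)
  | dump => exact absurd hs (h2 n)

variable (hμ : ∀ (x : ℕ → Bool) (n : ℕ), μ (cylinder x n) = 1 / 2 ^ n)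
  (hr0 : 0 < r) (hr1 : r < 1)

include hμ hr0 hr1

lemma tendsto_dd_iff (x : ℕ → Bool) (L : ℝ) :
    Tendsto (densSeq μ (KK r) x) atTop (𝓝 L) ↔
    Tendsto (fun n => nv r (state r x n)) atTop (𝓝 L) := by
  have he : densSeq μ (KK r) x = fun n => nv r (state r x n) :=
    funext (densSeq_eq hμ hr0 hr1 x)
  rw [he]

/-- the set of density-one points -/
lemma set_one_eq :
    {x | Tendsto (densSeq μ (KK r) x) atTop (𝓝 1)} = ⋃ n, {x | state r x n = .solid} := by
  ext x
  simp only [mem_setOf_eq, mem_iUnion]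
  rw [tendsto_dd_iff hμ hr0 hr1]
  constructor
  · intro ht
    rcases classify (r := r) x with h | ⟨n, hn⟩ | ⟨hns, hnd, n, u, hp⟩ | hsf
    · exact h
    · exfalso
      have h0 := tendsto_dump hn
      have := tendsto_nhds_unique ht h0
      norm_num at this
    · exact absurd ht (pay_no_limit hr0 hr1 hns hnd hp).2
    · exfalso
      rw [Metric.tendsto_atTop] at ht
      obtain ⟨N, hN⟩ := ht (1 - r) (by linarith)
      have h5 := hN N le_rfl
      rw [Real.dist_eq] at h5
      have h6 := vv_le_r hr0 hr1 (hsf N)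
      have h7 := (nv_mem hr0 hr1 (state_nodeOK hr0 hr1 x N)).1
      rw [abs_of_nonpos (by linarith)] at h5
      linarith
  · rintro ⟨n, hn⟩
    exact tendsto_solid hn

lemma isOpen_set_one :
    IsOpen {x | Tendsto (densSeq μ (KK r) x) atTop (𝓝 1)} := by
  rw [set_one_eq hμ hr0 hr1]
  exact isOpen_iUnion fun n => (prefix_state n (fun s => s = .solid)).1

/-- the set of density-r points -/
lemma set_r_eq :
    {x | Tendsto (densSeq μ (KK r) x) atTop (𝓝 r)} = {x | SpineF r x ∧ Conv r x} := by
  ext x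
  simp only [mem_setOf_eq]
  rw [tendsto_dd_iff hμ hr0 hr1]
  constructor
  · intro ht
    rcases classify (r := r) x with ⟨n, hn⟩ | ⟨n, hn⟩ | ⟨hns, hnd, n, u, hp⟩ | hsf
    · exfalso
      have := tendsto_nhds_unique ht (tendsto_solid hn)
      linarith
    · exfalso
      have := tendsto_nhds_unique ht (tendsto_dump hn)
      linarith
    · exact absurd ht ((pay_no_limit hr0 hr1 hns hnd hp).1 r hr0 hr1)
    · refine ⟨hsf, ?_⟩
      by_contra hc
      exact no_limit_of_not_conv hr0 hr1 hsf hc r ht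
  · rintro ⟨hsf, hc⟩
    exact tendsto_of_conv hr0 hr1 hsf hc

/-- the sharp set -/
lemma set_sharp_eq :
    {x | ∃ v : ℝ, 0 < v ∧ v < 1 ∧ Tendsto (densSeq μ (KK r) x) atTop (𝓝 v)} =
      {x | SpineF r x ∧ Conv r x} := by
  ext x
  simp only [mem_setOf_eq]
  constructor
  · rintro ⟨v, hv0, hv1, ht⟩
    rw [tendsto_dd_iff hμ hr0 hr1] at ht
    rcases classify (r := r) x with ⟨n, hn⟩ | ⟨n, hn⟩ | ⟨hns, hnd, n, u, hp⟩ | hsf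
    · exfalso
      have := tendsto_nhds_unique ht (tendsto_solid hn)
      linarith
    · exfalso
      have := tendsto_nhds_unique ht (tendsto_dump hn)
      linarith
    · exact absurd ht ((pay_no_limit hr0 hr1 hns hnd hp).1 v hv0 hv1)
    · refine ⟨hsf, ?_⟩
      by_contra hc
      exact no_limit_of_not_conv hr0 hr1 hsf hc v ht
  · rintro ⟨hsf, hc⟩
    refine ⟨r, hr0, hr1, ?_⟩
    rw [tendsto_dd_iff hμ hr0 hr1]
    exact tendsto_of_conv hr0 hr1 hsf hc

end Sets

end Stmt13

/-! ## Encoding a sequence of naturals as a spine branch -/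

namespace Stmt13

def blockBit (a t : ℕ) : Bool := decide (t < 2*a) && decide (t % 2 = 0)

def blockState (a t : ℕ) : Node :=
  if t = 2*a+4 then .read 0
  else if t = 2*a+3 then .dip2 a
  else if t = 2*a+2 then .dip a
  else if t = 2*a+1 then .paid a false
  else if t % 2 = 0 then .read (t/2)
  else .paid (t/2) true

lemma spine_blockState (a t : ℕ) : Spine (blockState a t) := by
  unfold blockState
  split_ifs <;> trivial

lemma blockState_dip {a t k : ℕ}
    (h : blockState a t = .dip k ∨ blockState a t = .dip2 k) : k = a := by
  unfold blockState at h
  split_ifs at h <;> rcases h with h | h <;> simp only [Node.dip.injEq, Node.dip2.injEq, Node.read.injEq, Node.paid.injEq, reduceCtorEq] at h <;> omega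

variable {r : ℝ}

lemma tr_blockState (a t : ℕ) (ht : t < 2*a+4) :
    tr r (blockState a t) (blockBit a t) = blockState a (t+1) := by
  by_cases h4 : t = 2*a+3
  · subst h4
    have hb : blockBit a (2*a+3) = false := by
      unfold blockBit
      rw [decide_eq_false (by omega)]
      simp
    have hs : blockState a (2*a+3) = .dip2 a := by
      unfold blockState
      rw [if_neg (by omega), if_pos rfl]
    have hs' : blockState a (2*a+3+1) = .read 0 := by
      unfold blockState
      rw [if_pos (by omega)]
    rw [hb, hs, hs']
    rfl
  by_cases h3 : t = 2*a+2
  · subst h3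
    have hb : blockBit a (2*a+2) = false := by
      unfold blockBit
      rw [decide_eq_false (by omega)]
      simp
    have hs : blockState a (2*a+2) = .dip a := by
      unfold blockState
      rw [if_neg (by omega), if_neg (by omega), if_pos rfl]
    have hs' : blockState a (2*a+2+1) = .dip2 a := by
      unfold blockState
      rw [if_neg (by omega), if_pos (by omega)]
    rw [hb, hs, hs']
    rfl
  by_cases h2 : t = 2*a+1
  · subst h2
    have hb : blockBit a (2*a+1) = false := by
      unfold blockBit
      rw [decide_eq_false (by omega)]
      simp
    have hs : blockState a (2*a+1) = .paid a false := by
      unfold blockState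
      rw [if_neg (by omega), if_neg (by omega), if_neg (by omega), if_pos rfl]
    have hs' : blockState a (2*a+1+1) = .dip a := by
      unfold blockState
      rw [if_neg (by omega), if_neg (by omega), if_pos (by omega)]
    rw [hb, hs, hs']
    rfl
  by_cases h1 : t = 2*a
  · subst h1
    have hb : blockBit a (2*a) = false := by
      unfold blockBit
      rw [decide_eq_false (by omega)]
      simp
    have hs : blockState a (2*a) = .read a := by
      unfold blockState
      rw [if_neg (by omega), if_neg (by omega), if_neg (by omega), if_neg (by omega),
        if_pos (by omega)]
      congr 1
      omega
    have hs' : blockState a (2*a+1) = .paid a false := by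
      unfold blockState
      rw [if_neg (by omega), if_neg (by omega), if_neg (by omega), if_pos rfl]
    rw [hb, hs, hs']
    rfl
  -- now t < 2*a
  have htlt : t < 2*a := by omega
  by_cases he : t % 2 = 0
  · have hb : blockBit a t = true := by
      unfold blockBit
      rw [decide_eq_true htlt, decide_eq_true he]
      rfl
    have hs : blockState a t = .read (t/2) := by
      unfold blockState
      rw [if_neg (by omega), if_neg (by omega), if_neg (by omega), if_neg (by omega), if_pos he]
    have hs' : blockState a (t+1) = .paid ((t+1)/2) true := by
      unfold blockState
      rw [if_neg (by omega), if_neg (by omega), if_neg (by omega), if_neg (by omega),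
        if_neg (by omega)]
    rw [hb, hs, hs']
    have : (t+1)/2 = t/2 := by omega
    rw [this]
    rfl
  · have hb : blockBit a t = false := by
      unfold blockBit
      rw [decide_eq_false (show ¬ (t % 2 = 0) from he)]
      simp
    have hs : blockState a t = .paid (t/2) true := by
      unfold blockState
      rw [if_neg (by omega), if_neg (by omega), if_neg (by omega), if_neg (by omega), if_neg he]
    have hs' : blockState a (t+1) = .read ((t+1)/2) := by
      unfold blockState
      rw [if_neg (by omega), if_neg (by omega), if_neg (by omega), if_neg (by omega),
        if_pos (by omega)]
    rw [hb, hs, hs']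
    have : (t+1)/2 = t/2 + 1 := by omega
    rw [this]
    rfl

lemma block_evolve (y : ℕ → Bool) (N a : ℕ) (h0 : state r y N = .read 0)
    (hb : ∀ t, t < 2*a+4 → y (N+t) = blockBit a t) :
    ∀ t, t ≤ 2*a+4 → state r y (N+t) = blockState a t := by
  intro t ht
  induction t with
  | zero =>
      have hs : blockState a 0 = .read 0 := by
        unfold blockState
        rw [if_neg (by omega), if_neg (by omega), if_neg (by omega), if_neg (by omega),
          if_pos (by omega)]
      rw [Nat.add_zero, hs, h0]
  | succ t ih =>
      have hts : t < 2*a+4 := by omega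
      have hst := ih (le_of_lt hts)
      have he : N + (t+1) = (N+t)+1 := by omega
      rw [he]
      show tr r (state r y (N+t)) (y (N+t)) = _
      rw [hst, hb t hts]
      exact tr_blockState a t hts

/-! ### positions and the global branch -/

def posF (α : ℕ → ℕ) : ℕ → ℕ
  | 0 => 0
  | n+1 => posF α n + (2 * α n + 4)

lemma posF_lt (α : ℕ → ℕ) (n : ℕ) : posF α n < posF α (n+1) := by
  show posF α n < posF α n + (2 * α n + 4)
  omega

lemma posF_mono (α : ℕ → ℕ) : StrictMono (posF α) := strictMono_nat_of_lt_succ (posF_lt α)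

lemma le_posF (α : ℕ → ℕ) (n : ℕ) : n ≤ posF α n := by
  induction n with
  | zero => exact le_rfl
  | succ n ih => have := posF_lt α n; omega

open Classical in
noncomputable def bIdx (α : ℕ → ℕ) (i : ℕ) : ℕ := Nat.findGreatest (fun m => posF α m ≤ i) i

lemma bIdx_le (α : ℕ → ℕ) (i : ℕ) : posF α (bIdx α i) ≤ i := by
  classical
  exact Nat.findGreatest_spec (P := fun m => posF α m ≤ i) (Nat.zero_le i) (Nat.zero_le i)

lemma bIdx_lt (α : ℕ → ℕ) (i : ℕ) : i < posF α (bIdx α i + 1) := by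
  classical
  by_contra h
  push_neg at h
  have h1 : bIdx α i + 1 ≤ i := le_trans (le_posF α _) h
  have h2 := Nat.le_findGreatest (P := fun m => posF α m ≤ i) h1 h
  unfold bIdx at *
  omega

lemma bIdx_eq (α : ℕ → ℕ) {i n : ℕ} (h1 : posF α n ≤ i) (h2 : i < posF α (n+1)) :
    bIdx α i = n := by
  classical
  have hb1 := bIdx_le α i
  have hb2 := bIdx_lt α i
  by_contra hne
  rcases Nat.lt_or_ge (bIdx α i) n with h | h
  · have : bIdx α i + 1 ≤ n := by omega
    have := posF_mono α |>.monotone this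
    omega
  · have : n + 1 ≤ bIdx α i := by omega
    have := posF_mono α |>.monotone this
    omega

noncomputable def gb (α : ℕ → ℕ) (i : ℕ) : Bool :=
  blockBit (α (bIdx α i)) (i - posF α (bIdx α i))

lemma gb_block (α : ℕ → ℕ) (n t : ℕ) (ht : t < 2 * α n + 4) :
    gb α (posF α n + t) = blockBit (α n) t := by
  have h1 : posF α n ≤ posF α n + t := by omega
  have h2 : posF α n + t < posF α (n+1) := by
    show _ < posF α n + (2 * α n + 4)
    omega
  unfold gb
  rw [bIdx_eq α h1 h2]
  congr 1
  omega

lemma state_gb_read (α : ℕ → ℕ) (n : ℕ) : state r (gb α) (posF α n) = .read 0 := by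
  induction n with
  | zero => rfl
  | succ n ih =>
      have hev := block_evolve (gb α) (posF α n) (α n) ih
        (fun t ht => gb_block α n t ht) (2 * α n + 4) le_rfl
      have hs : blockState (α n) (2 * α n + 4) = .read 0 := by
        unfold blockState
        rw [if_pos rfl]
      rw [← hs]
      exact hev

lemma state_gb (α : ℕ → ℕ) (i : ℕ) :
    state r (gb α) i = blockState (α (bIdx α i)) (i - posF α (bIdx α i)) := by
  have h1 := bIdx_le α i
  have h2 := bIdx_lt α i
  set n := bIdx α i with hn
  have ht : i - posF α n < 2 * α n + 4 := by
    have : posF α (n+1) = posF α n + (2 * α n + 4) := rfl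
    omega
  have hev := block_evolve (r := r) (gb α) (posF α n) (α n) (state_gb_read α n)
    (fun t ht => gb_block α n t ht) (i - posF α n) (le_of_lt ht)
  have he : posF α n + (i - posF α n) = i := by omega
  rw [he] at hev
  exact hev

lemma spineF_gb (α : ℕ → ℕ) : SpineF r (gb α) := by
  intro i
  rw [state_gb]
  exact spine_blockState _ _

lemma conv_gb_of_tendsto {α : ℕ → ℕ} (h : Tendsto α atTop atTop) : Conv r (gb α) := by
  intro j
  rw [tendsto_atTop_atTop] at h
  obtain ⟨n₀, hn₀⟩ := h (j+1)
  refine ⟨posF α n₀, fun i hi k hkj => ?_⟩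
  have hge : n₀ ≤ bIdx α i := by
    classical
    exact Nat.le_findGreatest (le_trans (le_posF α n₀) hi) hi
  have hαbig : j + 1 ≤ α (bIdx α i) := hn₀ _ hge
  constructor <;> intro hc <;>
  · have := blockState_dip (by rw [← state_gb (r := r) α i, hc]; first | exact Or.inl rfl | exact Or.inr rfl)
    omega

lemma not_conv_gb_of_freq {α : ℕ → ℕ} {k₀ : ℕ} (h : ∀ N, ∃ n, N ≤ n ∧ α n = k₀) :
    ¬ Conv r (gb α) := by
  intro hc
  obtain ⟨N, hN⟩ := hc k₀
  obtain ⟨n, hn, hα⟩ := h N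
  have hi : N ≤ posF α n + (2*k₀+2) := le_trans hn (le_trans (le_posF α n) (by omega))
  have hdip : state r (gb α) (posF α n + (2*k₀+2)) = .dip k₀ := by
    have hev := block_evolve (r := r) (gb α) (posF α n) (α n) (state_gb_read α n)
      (fun t ht => gb_block α n t ht) (2*k₀+2) (by omega)
    have hs : blockState (α n) (2*k₀+2) = .dip k₀ := by
      unfold blockState
      rw [hα, if_neg (by omega), if_neg (by omega), if_pos rfl]
    rw [hev, hs]
  exact (hN _ hi k₀ le_rfl).1 hdip

end Stmt13

/-! ## Counters extracting a Π⁰₃ presentation -/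

namespace Stmt13

lemma nat_mono_stab {f : ℕ → ℕ} (mono : Monotone f) {B : ℕ} (hB : ∀ n, f n ≤ B) :
    ∃ N, ∀ n, N ≤ n → f n = f N := by
  have hne : (Set.range f).Nonempty := ⟨f 0, Set.mem_range_self 0⟩
  have hbdd : BddAbove (Set.range f) := ⟨B, by rintro y ⟨n, rfl⟩; exact hB n⟩
  obtain ⟨N, hN⟩ := Nat.sSup_mem hne hbdd
  refine ⟨N, fun n hn => le_antisymm ?_ (mono hn)⟩
  rw [hN]
  exact le_csSup hbdd (Set.mem_range_self n)

lemma dite_find_congr {p q : ℕ → Prop} [DecidablePred p] [DecidablePred q]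
    [Decidable (∃ k, p k)] [Decidable (∃ k, q k)]
    (h : ∀ k, p k ↔ q k) (d : ℕ) :
    (if h' : ∃ k, p k then Nat.find h' else d) =
    (if h' : ∃ k, q k then Nat.find h' else d) := by
  by_cases hp : ∃ k, p k
  · have hq : ∃ k, q k := ⟨hp.choose, (h _).1 hp.choose_spec⟩
    rw [dif_pos hp, dif_pos hq]
    apply le_antisymm
    · exact Nat.find_min' hp ((h _).2 (Nat.find_spec hq))
    · exact Nat.find_min' hq ((h _).1 (Nat.find_spec hp))
  · have hq : ¬ ∃ k, q k := fun hk => hp ⟨hk.choose, (h _).2 hk.choose_spec⟩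
    rw [dif_neg hp, dif_neg hq]

lemma findGreatest_congr {p q : ℕ → Prop} [DecidablePred p] [DecidablePred q] (b : ℕ)
    (h : ∀ m, m ≤ b → (p m ↔ q m)) : Nat.findGreatest p b = Nat.findGreatest q b := by
  induction b with
  | zero => rfl
  | succ b ih =>
      rw [Nat.findGreatest_succ, Nat.findGreatest_succ]
      by_cases hp : p (b+1)
      · rw [if_pos hp, if_pos ((h (b+1) le_rfl).1 hp)]
      · rw [if_neg hp, if_neg (fun hq => hp ((h (b+1) le_rfl).2 hq))]
        exact ih (fun m hm => h m (by omega))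

section Red

variable (C : ℕ → ℕ → Set (ℕ → Bool))

def TrP (k m n : ℕ) (x : ℕ → Bool) : Prop := (C k m ∩ cylinder x n).Nonempty

lemma trP_anti {k m n n' : ℕ} {x : ℕ → Bool} (h : n ≤ n') (ht : TrP C k m n' x) :
    TrP C k m n x :=
  ht.mono (inter_subset_inter_right _ (cylinder_antitone x h))

open Classical in
noncomputable def mkk (k : ℕ) (x : ℕ → Bool) (n : ℕ) : ℕ :=
  if h : ∃ m, m ≤ n ∧ TrP C k m n x then Nat.find h else n + 1

lemma mkk_le (k : ℕ) (x : ℕ → Bool) (n : ℕ) : mkk C k x n ≤ n + 1 := by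
  classical
  unfold mkk
  split_ifs with h
  · have := Nat.find_spec h
    omega
  · exact le_rfl

lemma mkk_mono (k : ℕ) (x : ℕ → Bool) : Monotone (mkk C k x) := by
  classical
  apply monotone_nat_of_le_succ
  intro n
  by_cases h' : ∃ m, m ≤ n+1 ∧ TrP C k m (n+1) x
  · have hR : mkk C k x (n+1) = Nat.find h' := by unfold mkk; rw [dif_pos h']
    have hs := Nat.find_spec h'
    by_cases hm : Nat.find h' ≤ n
    · have hTr : TrP C k (Nat.find h') n x := trP_anti C (by omega) hs.2
      have h : ∃ m, m ≤ n ∧ TrP C k m n x := ⟨Nat.find h', hm, hTr⟩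
      have hL : mkk C k x n = Nat.find h := by unfold mkk; rw [dif_pos h]
      rw [hL, hR]
      exact Nat.find_min' h ⟨hm, hTr⟩
    · have h1 := mkk_le C k x n
      rw [hR]
      omega
  · have hR : mkk C k x (n+1) = n+2 := by unfold mkk; rw [dif_neg h']
    have h1 := mkk_le C k x n
    rw [hR]
    omega

lemma mkk_bdd_of_mem {k m₀ : ℕ} {x : ℕ → Bool} (hx : x ∈ C k m₀) (n : ℕ) :
    mkk C k x n ≤ m₀ + 1 := by
  classical
  rcases le_or_gt m₀ n with h | h
  · have hTr : TrP C k m₀ n x := ⟨x, hx, self_mem_cylinder x n⟩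
    have hex : ∃ m, m ≤ n ∧ TrP C k m n x := ⟨m₀, h, hTr⟩
    unfold mkk
    rw [dif_pos hex]
    have := Nat.find_min' hex ⟨h, hTr⟩
    omega
  · have := mkk_le C k x n
    omega

lemma mem_of_mkk_bdd (hCcl : ∀ k m, IsClosed (C k m)) {k B : ℕ} {x : ℕ → Bool}
    (hB : ∀ n, mkk C k x n ≤ B) : x ∈ ⋃ m, C k m := by
  classical
  obtain ⟨N, hN⟩ := nat_mono_stab (mkk_mono C k x) hB
  set M := mkk C k x N with hM
  have key : ∀ n, N ≤ n → M ≤ n → TrP C k M n x := by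
    intro n h1 h2
    have he : mkk C k x n = M := hN n h1
    by_cases hex : ∃ m, m ≤ n ∧ TrP C k m n x
    · have he2 : mkk C k x n = Nat.find hex := by unfold mkk; rw [dif_pos hex]
      have hs := Nat.find_spec hex
      rw [he2] at he
      rw [he] at hs
      exact hs.2
    · have he2 : mkk C k x n = n + 1 := by unfold mkk; rw [dif_neg hex]
      omega
  have hTr : ∀ n, TrP C k M n x := by
    intro n
    have h3 := key (max n (max N M))
      (le_trans (le_max_left N M) (le_max_right n _))
      (le_trans (le_max_right N M) (le_max_right n _))
    exact trP_anti C (le_max_left n _) h3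
  set Z : ℕ → Set (ℕ → Bool) := fun n => C k M ∩ cylinder x n with hZ
  have hZd : ∀ n, Z (n+1) ⊆ Z n := fun n =>
    inter_subset_inter_right _ (cylinder_antitone x (by omega))
  have hZn : ∀ n, (Z n).Nonempty := hTr
  have hZcl : ∀ n, IsClosed (Z n) := fun n => (hCcl k M).inter (isClosed_cylinder x n)
  obtain ⟨y, hy⟩ := IsCompact.nonempty_iInter_of_sequence_nonempty_isCompact_isClosed
    Z hZd hZn ((hZcl 0).isCompact) hZcl
  have hyx : y = x := by
    funext i
    exact (mem_iInter.1 hy (i+1)).2 i (by omega)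
  exact mem_iUnion.2 ⟨M, hyx ▸ (mem_iInter.1 hy 0).1⟩

lemma changes_of_not_mem (hCcl : ∀ k m, IsClosed (C k m)) {k : ℕ} {x : ℕ → Bool}
    (hx : x ∉ ⋃ m, C k m) : ∀ N, ∃ n, N ≤ n ∧ mkk C k x (n+1) ≠ mkk C k x n := by
  classical
  by_contra hc
  push_neg at hc
  obtain ⟨N, hN⟩ := hc
  have hconst : ∀ n, N ≤ n → mkk C k x n = mkk C k x N := by
    intro n hn
    induction n, hn using Nat.le_induction with
    | base => rfl
    | succ n hn ih => rw [hN n hn, ih]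
  have hB : ∀ n, mkk C k x n ≤ mkk C k x N := by
    intro n
    rcases le_or_gt n N with h | h
    · exact mkk_mono C k x h
    · rw [hconst n (le_of_lt h)]
  exact hx (mem_of_mkk_bdd C hCcl hB)

open Classical in
noncomputable def alph (x : ℕ → Bool) (n : ℕ) : ℕ :=
  if h : ∃ k, k ≤ n ∧ mkk C k x (n+1) ≠ mkk C k x n then Nat.find h else n

lemma alph_tendsto (hCcl : ∀ k m, IsClosed (C k m)) (x : ℕ → Bool)
    (hx : ∀ k, x ∈ ⋃ m, C k m) : Tendsto (alph C x) atTop atTop := by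
  classical
  rw [tendsto_atTop_atTop]
  intro j
  have hstab : ∀ k, ∃ N, ∀ n, N ≤ n → mkk C k x n = mkk C k x N := by
    intro k
    obtain ⟨m₀, hm₀⟩ := mem_iUnion.1 (hx k)
    exact nat_mono_stab (mkk_mono C k x) (fun n => mkk_bdd_of_mem C hm₀ n)
  choose Nf hNf using hstab
  refine ⟨max j ((Finset.range (j+1)).sup Nf), fun n hn => ?_⟩
  unfold alph
  split_ifs with hex
  · have hs := Nat.find_spec hex
    by_contra hlt
    push_neg at hlt
    have hk₀ : Nat.find hex < j + 1 := by omega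
    have hNle : Nf (Nat.find hex) ≤ n :=
      le_trans (Finset.le_sup (Finset.mem_range.2 hk₀)) (le_trans (le_max_right _ _) hn)
    have e1 := hNf (Nat.find hex) n hNle
    have e2 := hNf (Nat.find hex) (n+1) (by omega)
    exact hs.2 (e2.trans e1.symm)
  · exact le_trans (le_max_left _ _) hn

lemma alph_freq (hCcl : ∀ k m, IsClosed (C k m)) (x : ℕ → Bool)
    (hx : ¬ ∀ k, x ∈ ⋃ m, C k m) : ∃ k₀, ∀ N, ∃ n, N ≤ n ∧ alph C x n = k₀ := by
  classical
  push_neg at hx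
  have hex : ∃ k, x ∉ ⋃ m, C k m := hx
  classical
  have hk₀ := Nat.find_spec hex
  have hmin : ∀ k, k < Nat.find hex → x ∈ ⋃ m, C k m :=
    fun k hk => not_not.1 (Nat.find_min hex hk)
  set k₀ := Nat.find hex with hk₀def
  refine ⟨k₀, fun N => ?_⟩
  have hstab : ∀ k, k < k₀ → ∃ Nk, ∀ n, Nk ≤ n → mkk C k x n = mkk C k x Nk := by
    intro k hk
    obtain ⟨m₀, hm₀⟩ := mem_iUnion.1 (hmin k hk)
    exact nat_mono_stab (mkk_mono C k x) (fun n => mkk_bdd_of_mem C hm₀ n)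
  choose! Nf hNf using hstab
  obtain ⟨n, hn, hch⟩ := changes_of_not_mem C hCcl hk₀
    (max N (max k₀ ((Finset.range k₀).sup Nf)))
  refine ⟨n, le_trans (le_max_left _ _) hn, ?_⟩
  unfold alph
  have hex2 : ∃ k, k ≤ n ∧ mkk C k x (n+1) ≠ mkk C k x n :=
    ⟨k₀, le_trans (le_trans (le_max_left _ _) (le_max_right _ _)) hn, hch⟩
  rw [dif_pos hex2]
  have hle : Nat.find hex2 ≤ k₀ :=
    Nat.find_min' hex2 ⟨le_trans (le_trans (le_max_left _ _) (le_max_right _ _)) hn, hch⟩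
  have hs := Nat.find_spec hex2
  by_contra hne
  have hlt : Nat.find hex2 < k₀ := by omega
  have hNk : Nf (Nat.find hex2) ≤ n :=
    le_trans (le_trans (Finset.le_sup (Finset.mem_range.2 hlt))
      (le_trans (le_max_right _ _) (le_max_right _ _))) hn
  have e1 := hNf (Nat.find hex2) hlt n hNk
  have e2 := hNf (Nat.find hex2) hlt (n+1) (by omega)
  exact hs.2 (e2.trans e1.symm)

end Red

end Stmt13

/-! ## Continuity of the reduction and hardness -/

namespace Stmt13

section Red2

variable (C : ℕ → ℕ → Set (ℕ → Bool))

lemma trP_congr {k m n : ℕ} {x y : ℕ → Bool} (h : ∀ i < n, x i = y i) :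
    TrP C k m n x ↔ TrP C k m n y := by
  unfold TrP
  rw [cylinder_eq_of_agree h]

lemma mkk_congr {k n : ℕ} {x y : ℕ → Bool} (h : ∀ i < n, x i = y i) :
    mkk C k x n = mkk C k y n := by
  classical
  unfold mkk
  exact dite_find_congr (fun m => and_congr_right fun _ => trP_congr C h) (n+1)

lemma alph_congr {n : ℕ} {x y : ℕ → Bool} (h : ∀ i < n+1, x i = y i) :
    alph C x n = alph C y n := by
  classical
  unfold alph
  refine dite_find_congr (fun k => and_congr_right fun _ => ?_) n
  have h1 : mkk C k x n = mkk C k y n := mkk_congr C (fun i hi => h i (by omega))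
  have h2 : mkk C k x (n+1) = mkk C k y (n+1) := mkk_congr C (fun i hi => h i hi)
  rw [h1, h2]

lemma gb_congr {i : ℕ} {α β : ℕ → ℕ} (h : ∀ n ≤ i, α n = β n) :
    gb α i = gb β i := by
  classical
  have hpos : ∀ m, m ≤ i+1 → posF α m = posF β m := by
    intro m hm
    induction m with
    | zero => rfl
    | succ m ih =>
        show posF α m + (2 * α m + 4) = posF β m + (2 * β m + 4)
        rw [ih (by omega), h m (by omega)]
  have hidx : bIdx α i = bIdx β i := by
    unfold bIdx
    refine findGreatest_congr i (fun m hm => ?_)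
    rw [hpos m (by omega)]
  unfold gb
  have hb1 : bIdx β i ≤ i := Nat.findGreatest_le i
  rw [hidx, hpos (bIdx β i) (by omega), h (bIdx β i) hb1]

/-- the reduction map -/
noncomputable def gred (x : ℕ → Bool) : ℕ → Bool := gb (alph C x)

lemma continuous_gred : Continuous (gred C) := by
  apply continuous_pi
  intro i
  apply IsLocallyConstant.continuous
  intro s
  refine (prefix_set_basic (fun x => gred C x i ∈ s) (i+2) ?_).1
  intro x y h hx
  have hg : gred C x i = gred C y i := by
    unfold gred
    refine gb_congr (fun n hn => ?_)
    exact alph_congr C (fun j hj => h j (by omega))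
  rwa [hg] at hx

variable {r : ℝ}

lemma hardness (hr0 : 0 < r) (hr1 : r < 1) (T : Set (ℕ → Bool)) (hT : IsPi03 T) :
    ∃ g : (ℕ → Bool) → (ℕ → Bool), Continuous g ∧
      T = g ⁻¹' {x | SpineF r x ∧ Conv r x} := by
  obtain ⟨F, hFsig, hTeq⟩ := hT
  choose C' hCcl hCeq using hFsig
  refine ⟨gred C', continuous_gred C', ?_⟩
  ext x
  simp only [mem_preimage, mem_setOf_eq]
  constructor
  · intro hx
    have hx' : ∀ k, x ∈ ⋃ m, C' k m := by
      intro k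
      rw [← hCeq k]
      have : x ∈ ⋂ n, F n := hTeq ▸ hx
      exact mem_iInter.1 this k
    exact ⟨spineF_gb _, conv_gb_of_tendsto (alph_tendsto C' hCcl x hx')⟩
  · rintro ⟨hsf, hcv⟩
    by_contra hxT
    have hx' : ¬ ∀ k, x ∈ ⋃ m, C' k m := by
      intro hk
      apply hxT
      rw [hTeq]
      exact mem_iInter.2 fun k => (hCeq k) ▸ hk k
    obtain ⟨k₀, hk₀⟩ := alph_freq C' hCcl x hx'
    exact not_conv_gb_of_freq hk₀ hcv

end Red2

end Stmt13

/-! ## Upper bound: the tendsto sets are Π⁰₃ -/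

namespace Stmt13

lemma densSeq_prefix (μ : Measure (ℕ → Bool)) (K : Set (ℕ → Bool)) {x y : ℕ → Bool} {n : ℕ}
    (h : ∀ i < n, x i = y i) : densSeq μ K x n = densSeq μ K y n := by
  unfold densSeq
  rw [cylinder_eq_of_agree h]

lemma isPi03_tendsto_dens (μ : Measure (ℕ → Bool)) (K : Set (ℕ → Bool)) (c : ℝ) :
    IsPi03 {x | Tendsto (densSeq μ K x) atTop (𝓝 c)} := by
  classical
  refine ⟨fun q => ⋃ N : ℕ, ⋂ n : ℕ, ⋂ (_ : N ≤ n),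
      {x | |densSeq μ K x n - c| ≤ 1/((q:ℝ)+1)}, fun q => ?_, ?_⟩
  · refine ⟨fun N => ⋂ n : ℕ, ⋂ (_ : N ≤ n), {x | |densSeq μ K x n - c| ≤ 1/((q:ℝ)+1)},
      fun N => ?_, rfl⟩
    apply isClosed_iInter; intro n; apply isClosed_iInter; intro _
    have hopen := (prefix_set_basic (fun x => ¬ (|densSeq μ K x n - c| ≤ 1/((q:ℝ)+1))) n
      (fun x y h hx => by rwa [densSeq_prefix μ K h] at hx)).1
    have he : {x | |densSeq μ K x n - c| ≤ 1/((q:ℝ)+1)} =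
        {x | ¬ (|densSeq μ K x n - c| ≤ 1/((q:ℝ)+1))}ᶜ := by
      ext x; simp
    rw [he]
    exact hopen.isClosed_compl
  · ext x
    simp only [mem_setOf_eq, mem_iInter, mem_iUnion]
    rw [Metric.tendsto_atTop]
    constructor
    · intro ht q
      obtain ⟨N, hN⟩ := ht (1/((q:ℝ)+1)) (by positivity)
      refine ⟨N, fun n hn => ?_⟩
      have := hN n hn
      rw [Real.dist_eq] at this
      exact le_of_lt this
    · intro h ε hε
      obtain ⟨q, hq⟩ := exists_nat_one_div_lt hε
      obtain ⟨N, hN⟩ := h q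
      refine ⟨N, fun n hn => ?_⟩
      rw [Real.dist_eq]
      exact lt_of_le_of_lt (hN n hn) hq

end Stmt13

/-- **A compact set whose sharp points form a `Π⁰₃`-complete set.** Let `μ` be the
coin-tossing measure on the Cantor space and fix `r ∈ (0,1)`. There is a compact
`K ⊆ 2^ℕ` such that `Φ(K)` is open, `Sharp(K)` is `Π⁰₃`-complete, and moreover
`{x | D_K(x) = r}` is `Π⁰₃`-complete. -/
theorem stmt_13 (μ : Measure (ℕ → Bool))
    (hμ : ∀ (x : ℕ → Bool) (n : ℕ), μ (cylinder x n) = 1 / 2 ^ n)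
    (r : ℝ) (hr0 : 0 < r) (hr1 : r < 1) :
    ∃ K : Set (ℕ → Bool), IsCompact K ∧
      IsOpen {x | Tendsto (densSeq μ K x) atTop (𝓝 1)} ∧
      IsPi03Complete {x | ∃ v : ℝ, 0 < v ∧ v < 1 ∧ Tendsto (densSeq μ K x) atTop (𝓝 v)} ∧
      IsPi03Complete {x | Tendsto (densSeq μ K x) atTop (𝓝 r)} := by
  refine ⟨Stmt13.KK r, Stmt13.isCompact_KK, Stmt13.isOpen_set_one hμ hr0 hr1, ⟨?_, ?_⟩, ⟨?_, ?_⟩⟩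
  · rw [Stmt13.set_sharp_eq hμ hr0 hr1, ← Stmt13.set_r_eq hμ hr0 hr1]
    exact Stmt13.isPi03_tendsto_dens μ _ r
  · intro T hT
    obtain ⟨g, hg, he⟩ := Stmt13.hardness hr0 hr1 T hT
    refine ⟨g, hg, ?_⟩
    rw [Stmt13.set_sharp_eq hμ hr0 hr1]
    exact he
  · exact Stmt13.isPi03_tendsto_dens μ _ r
  · intro T hT
    obtain ⟨g, hg, he⟩ := Stmt13.hardness hr0 hr1 T hT
    refine ⟨g, hg, ?_⟩
    rw [Stmt13.set_r_eq hμ hr0 hr1]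
    exact he
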